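/- Transfer of the closing property to conics tangent at the same point: Let W ⊆ ℝ³ be a 2-dimensional subspace (a line ℓ) and R ∈ W a nonzero vector with ⟨R,R⟩ = 0 and ⟨R,X⟩ = 0 for all X ∈ W (ℓ is tangent to the conic C at R). Let P₁,…,P_{2n} ∈ W with ⟨Pᵢ,Pᵢ⟩ ≠ 0 have the closing property with respect to the Minkowski form. Let B be any nondegenerate symmetric bilinear form on ℝ³ with B(R,R) = 0 and B(R,X) = 0 for all X ∈ W (the conic D_B is tangent to ℓ at R) such that B(Pᵢ,Pᵢ) ≠ 0 for all i. Then P₁,…,P_{2n} have the closing property with respect to B. -/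

import Mathlib

/-- Minkowski product on ℝ³. -/
def mink (X Y : Fin 3 → ℝ) : ℝ := X 0 * Y 0 + X 1 * Y 1 - X 2 * Y 2

/-- The reversion map with respect to the (bilinear) form `B` in the point `P`
(with `B P P ≠ 0`): `M_P^B X = B(P,P)X − 2B(X,P)P`. -/
def revB (B : (Fin 3 → ℝ) → (Fin 3 → ℝ) → ℝ) (P X : Fin 3 → ℝ) : Fin 3 → ℝ :=
  B P P • X - (2 * B X P) • P

/-- `chainB B n P X = (M_{P n}^B ∘ ⋯ ∘ M_{P 1}^B) X`, the composition of the reversions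
with respect to `B` in `P 0, …, P (n-1)`, applied in this order. -/
def chainB (B : (Fin 3 → ℝ) → (Fin 3 → ℝ) → ℝ) :
    (n : ℕ) → (Fin n → (Fin 3 → ℝ)) → (Fin 3 → ℝ) → (Fin 3 → ℝ)
  | 0, _, X => X
  | n + 1, P, X => revB B (P (Fin.last n)) (chainB B n (fun i => P i.castSucc) X)

/-- The points `P 0, …, P (n-1)` have the closing property with respect to the form `B`
iff `M_{P n}^B ∘ ⋯ ∘ M_{P 1}^B` is a nonzero scalar multiple of the identity. For
`B = mink` this is the closing property with respect to the conic `C`. -/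
def closesB (B : (Fin 3 → ℝ) → (Fin 3 → ℝ) → ℝ) (n : ℕ) (P : Fin n → (Fin 3 → ℝ)) :
    Prop :=
  ∃ c : ℝ, c ≠ 0 ∧ ∀ X, chainB B n P X = c • X

section Aux

variable {B : (Fin 3 → ℝ) → (Fin 3 → ℝ) → ℝ}
  (hBlin : ∀ (c : ℝ) (x x' y : Fin 3 → ℝ), B (c • x + x') y = c * B x y + B x' y)
  (hBsymm : ∀ x y, B x y = B y x)

include hBlin

lemma B_zero_left (y : Fin 3 → ℝ) : B 0 y = 0 := by
  have h := hBlin 1 0 0 y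
  simp only [one_smul, add_zero, one_mul] at h
  linarith

lemma B_smul_left (c : ℝ) (x y : Fin 3 → ℝ) : B (c • x) y = c * B x y := by
  have h := hBlin c x 0 y
  simpa [B_zero_left hBlin] using h

lemma B_add_left (x x' y : Fin 3 → ℝ) : B (x + x') y = B x y + B x' y := by
  simpa using hBlin 1 x x' y

lemma B_sub_left (x x' y : Fin 3 → ℝ) : B (x - x') y = B x y - B x' y := by
  have h := B_add_left hBlin x (-x') y
  have h2 : B (-x') y = -B x' y := by
    have := B_smul_left hBlin (-1) x' y
    simpa using this
  rw [h2] at h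
  simpa [sub_eq_add_neg] using h

include hBsymm

lemma B_expand2 (a b d e : ℝ) (X P Y : Fin 3 → ℝ) :
    B (a • X - b • P) (d • Y - e • P)
      = a * d * B X Y - a * e * B X P - b * d * B P Y + b * e * B P P := by
  rw [B_sub_left hBlin, B_smul_left hBlin, B_smul_left hBlin]
  rw [hBsymm X (d • Y - e • P), hBsymm P (d • Y - e • P)]
  rw [B_sub_left hBlin, B_smul_left hBlin, B_smul_left hBlin,
    B_sub_left hBlin, B_smul_left hBlin, B_smul_left hBlin]
  rw [hBsymm Y X, hBsymm P X, hBsymm Y P]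
  ring

lemma revB_conf (P X Y : Fin 3 → ℝ) :
    B (revB B P X) (revB B P Y) = (B P P) ^ 2 * B X Y := by
  unfold revB
  rw [B_expand2 hBlin hBsymm]
  rw [hBsymm P Y]
  ring

lemma chainB_conf : ∀ (n : ℕ) (P : Fin n → (Fin 3 → ℝ)) (X Y : Fin 3 → ℝ),
    B (chainB B n P X) (chainB B n P Y)
      = (∏ i, (B (P i) (P i)) ^ 2) * B X Y := by
  intro n
  induction n with
  | zero => intro P X Y; simp [chainB]
  | succ k ih =>
    intro P X Y
    simp only [chainB]
    rw [revB_conf hBlin hBsymm, ih, Fin.prod_univ_castSucc]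
    ring

end Aux

lemma chainB_linear {B : (Fin 3 → ℝ) → (Fin 3 → ℝ) → ℝ}
    (hBlin : ∀ (c : ℝ) (x x' y : Fin 3 → ℝ), B (c • x + x') y = c * B x y + B x' y) :
    ∀ (n : ℕ) (P : Fin n → (Fin 3 → ℝ)) (a : ℝ) (X X' : Fin 3 → ℝ),
      chainB B n P (a • X + X') = a • chainB B n P X + chainB B n P X' := by
  intro n
  induction n with
  | zero => intro P a X X'; rfl
  | succ k ih =>
    intro P a X X'
    simp only [chainB]
    rw [ih]
    unfold revB
    rw [hBlin]
    module

lemma chainB_prop {B : (Fin 3 → ℝ) → (Fin 3 → ℝ) → ℝ}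
    (hBlin : ∀ (c : ℝ) (x x' y : Fin 3 → ℝ), B (c • x + x') y = c * B x y + B x' y)
    (W : Submodule ℝ (Fin 3 → ℝ)) (κ : ℝ)
    (hprop : ∀ X ∈ W, ∀ Y ∈ W, B X Y = κ * mink X Y) :
    ∀ (n : ℕ) (P : Fin n → (Fin 3 → ℝ)), (∀ i, P i ∈ W) → ∀ X ∈ W,
      chainB mink n P X ∈ W ∧ chainB B n P X = κ ^ n • chainB mink n P X := by
  intro n
  induction n with
  | zero =>
    intro P hP X hX
    exact ⟨hX, by simp [chainB]⟩
  | succ k ih =>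
    intro P hP X hX
    obtain ⟨hmem, heq⟩ := ih (fun i => P i.castSucc) (fun i => hP _) X hX
    set Pl := P (Fin.last k) with hPl
    set Y := chainB mink k (fun i => P i.castSucc) X with hY
    have hPlW : Pl ∈ W := hP _
    constructor
    · show revB mink Pl Y ∈ W
      exact Submodule.sub_mem _ (Submodule.smul_mem _ _ hmem)
        (Submodule.smul_mem _ _ hPlW)
    · show revB B Pl (chainB B k (fun i => P i.castSucc) X) = κ ^ (k+1) • revB mink Pl Y
      rw [heq]
      unfold revB
      rw [B_smul_left hBlin, hprop Pl hPlW Pl hPlW, hprop Y hmem Pl hPlW, pow_succ]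
      module

/-- **Transfer of the closing property to conics tangent at the same point.**
If the line `W` is tangent to the conic `C` at `R` and `P 0, …, P (2n-1)` on `W` have
the closing property with respect to the Minkowski form, then they have the closing
property with respect to any nondegenerate symmetric bilinear form `B` whose conic is
tangent to `W` at `R`, provided the `P i` are off the corresponding conic. -/
theorem closing_transfer_tangent
    (W : Submodule ℝ (Fin 3 → ℝ)) (hdim : Module.finrank ℝ W = 2)
    (R : Fin 3 → ℝ) (hR : R ∈ W) (hR0 : R ≠ 0) (hRC : mink R R = 0)
    (hRtang : ∀ X ∈ W, mink R X = 0)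
    (n : ℕ) (P : Fin (2 * n) → (Fin 3 → ℝ))
    (hPW : ∀ i, P i ∈ W)
    (hPC : ∀ i, mink (P i) (P i) ≠ 0)
    (hclose : closesB mink (2 * n) P)
    (B : (Fin 3 → ℝ) → (Fin 3 → ℝ) → ℝ)
    (hBlin : ∀ (c : ℝ) (x x' y : Fin 3 → ℝ), B (c • x + x') y = c * B x y + B x' y)
    (hBsymm : ∀ x y, B x y = B y x)
    (hBnd : ∀ x, (∀ y, B x y = 0) → x = 0)
    (hBR : B R R = 0) (hBtang : ∀ X ∈ W, B R X = 0)
    (hBP : ∀ i, B (P i) (P i) ≠ 0) :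
    closesB B (2 * n) P := by
  rcases Nat.eq_zero_or_pos n with hn0 | hn
  · subst hn0
    refine ⟨1, one_ne_zero, fun X => ?_⟩
    rw [one_smul]
    rfl
  -- basic bilinearity facts
  have Bsl := B_smul_left hBlin
  have Bal := B_add_left hBlin
  have Bsr : ∀ (c : ℝ) (x y : Fin 3 → ℝ), B x (c • y) = c * B x y := by
    intro c x y; rw [hBsymm, Bsl, hBsymm]
  have Bar : ∀ (x y y' : Fin 3 → ℝ), B x (y + y') = B x y + B x y' := by
    intro x y y'; rw [hBsymm, Bal, hBsymm, hBsymm y' x]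
  have msl : ∀ (c : ℝ) (x y : Fin 3 → ℝ), mink (c • x) y = c * mink x y := by
    intro c x y; simp only [mink, Pi.smul_apply, smul_eq_mul]; ring
  have mal : ∀ (x x' y : Fin 3 → ℝ), mink (x + x') y = mink x y + mink x' y := by
    intro x x' y; simp only [mink, Pi.add_apply]; ring
  have msymm : ∀ x y, mink x y = mink y x := by
    intro x y; simp only [mink]; ring
  -- the distinguished point Q
  set i0 : Fin (2 * n) := ⟨0, by omega⟩ with hi0
  set Q := P i0 with hQ
  have hQW : Q ∈ W := hPW i0
  have hmQ : mink Q Q ≠ 0 := hPC i0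
  have hbQ : B Q Q ≠ 0 := hBP i0
  -- {R, Q} is a basis of W
  have hli : LinearIndependent ℝ ![R, Q] := by
    rw [LinearIndependent.pair_iff]
    intro s t hst
    have h1 : mink (s • R + t • Q) Q = 0 := by rw [hst]; simp [mink]
    rw [mal, msl, msl, hRtang Q hQW] at h1
    have ht : t = 0 := by
      rcases mul_eq_zero.1 (by linarith : t * mink Q Q = 0) with h | h
      · exact h
      · exact absurd h hmQ
    subst ht
    simp only [zero_smul, add_zero] at hst
    rcases smul_eq_zero.1 hst with h | h
    · exact ⟨h, rfl⟩
    · exact absurd h hR0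
  have hspanW : Submodule.span ℝ ({R, Q} : Set (Fin 3 → ℝ)) = W := by
    apply Submodule.eq_of_le_of_finrank_le
    · rw [Submodule.span_le]
      intro x hx
      rcases hx with h | h
      · simpa [h] using hR
      · simp only [Set.mem_singleton_iff] at h; simpa [h] using hQW
    · rw [hdim]
      have hr : Set.range ![R, Q] = {R, Q} := by
        exact Matrix.range_cons_cons_empty R Q ![]
      have := finrank_span_eq_card hli
      rw [hr] at this
      rw [this]
      simp
  have hdecW : ∀ X ∈ W, ∃ a b : ℝ, X = a • R + b • Q := by
    intro X hX
    rw [← hspanW] at hX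
    obtain ⟨a, b, hab⟩ := Submodule.mem_span_pair.1 hX
    exact ⟨a, b, hab.symm⟩
  -- proportionality of B and mink on W
  set κ : ℝ := B Q Q / mink Q Q with hκ
  have hκ0 : κ ≠ 0 := div_ne_zero hbQ hmQ
  have msr : ∀ (c : ℝ) (x y : Fin 3 → ℝ), mink x (c • y) = c * mink x y := by
    intro c x y; rw [msymm, msl, msymm]
  have mar : ∀ (x y y' : Fin 3 → ℝ), mink x (y + y') = mink x y + mink x y' := by
    intro x y y'; rw [msymm, mal, msymm y x, msymm y' x]
  have hprop : ∀ X ∈ W, ∀ Y ∈ W, B X Y = κ * mink X Y := by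
    intro X hX Y hY
    obtain ⟨a, b, habX⟩ := hdecW X hX
    obtain ⟨a', b', habY⟩ := hdecW Y hY
    subst habX; subst habY
    have hBRy : B R (a' • R + b' • Q) = 0 := by
      rw [Bar, Bsr, Bsr, hBR, hBtang Q hQW]; ring
    have hBQy : B Q (a' • R + b' • Q) = b' * B Q Q := by
      rw [Bar, Bsr, Bsr, hBsymm Q R, hBtang Q hQW]; ring
    have e1 : B (a • R + b • Q) (a' • R + b' • Q) = b * b' * B Q Q := by
      rw [Bal, Bsl, Bsl, hBRy, hBQy]; ring
    have hmRy : mink R (a' • R + b' • Q) = 0 := by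
      rw [mar, msr, msr, hRC, hRtang Q hQW]; ring
    have hmQy : mink Q (a' • R + b' • Q) = b' * mink Q Q := by
      rw [mar, msr, msr, msymm Q R, hRtang Q hQW]; ring
    have e2 : mink (a • R + b • Q) (a' • R + b' • Q) = b * b' * mink Q Q := by
      rw [mal, msl, msl, hmRy, hmQy]; ring
    rw [e1, e2, hκ]
    field_simp
  -- the scalar for B
  obtain ⟨c, hc0, hcX⟩ := hclose
  set d : ℝ := κ ^ (2 * n) * c with hd
  have hd0 : d ≠ 0 := mul_ne_zero (pow_ne_zero _ hκ0) hc0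
  set M := chainB B (2 * n) P with hM
  have hMW : ∀ X ∈ W, M X = d • X := by
    intro X hX
    obtain ⟨-, heq⟩ := chainB_prop hBlin W κ hprop (2 * n) P hPW X hX
    rw [hM, heq, hcX, smul_smul, hd]
  -- conformality constant
  set e : ℝ := ∏ i, (B (P i) (P i)) ^ 2 with he
  have hconf : ∀ X Y, B (M X) (M Y) = e * B X Y := fun X Y =>
    chainB_conf hBlin hBsymm (2 * n) P X Y
  have hed : e = d ^ 2 := by
    have h := hconf Q Q
    rw [hMW Q hQW, Bsl, Bsr] at h
    have h2 : e * B Q Q = d ^ 2 * B Q Q := by rw [← h]; ring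
    exact mul_right_cancel₀ hbQ h2
  -- a vector outside W
  have hWne : ∃ Y₀, Y₀ ∉ W := by
    by_contra h
    push_neg at h
    have : W = ⊤ := Submodule.eq_top_iff'.2 h
    rw [this, finrank_top] at hdim
    simp [Module.finrank_fin_fun] at hdim
  obtain ⟨Y₀, hY₀⟩ := hWne
  -- decomposition of all of ℝ³
  have htop : W ⊔ Submodule.span ℝ {Y₀} = ⊤ := by
    apply Submodule.eq_top_of_finrank_eq
    have hlt : W < W ⊔ Submodule.span ℝ {Y₀} := by
      refine lt_of_le_of_ne le_sup_left ?_
      intro hEq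
      apply hY₀
      rw [hEq]
      exact Submodule.mem_sup_right (Submodule.mem_span_singleton_self Y₀)
    have h1 : Module.finrank ℝ W < Module.finrank ℝ ↥(W ⊔ Submodule.span ℝ {Y₀}) :=
      Submodule.finrank_lt_finrank_of_lt hlt
    have h2 : Module.finrank ℝ ↥(W ⊔ Submodule.span ℝ {Y₀}) ≤ Module.finrank ℝ (Fin 3 → ℝ) :=
      Submodule.finrank_le _
    rw [hdim] at h1
    simp only [Module.finrank_fin_fun] at h2 ⊢
    omega
  have hdecAll : ∀ Y : Fin 3 → ℝ, ∃ w ∈ W, ∃ s : ℝ, Y = w + s • Y₀ := by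
    intro Y
    have hY : Y ∈ W ⊔ Submodule.span ℝ {Y₀} := htop ▸ Submodule.mem_top
    obtain ⟨w, hw, z, hz, hwz⟩ := Submodule.mem_sup.1 hY
    obtain ⟨s, hs⟩ := Submodule.mem_span_singleton.1 hz
    exact ⟨w, hw, s, by rw [← hwz, ← hs]⟩
  -- B R Y₀ ≠ 0
  have hRY₀ : B R Y₀ ≠ 0 := by
    intro h0
    apply hR0
    apply hBnd
    intro y
    obtain ⟨w, hw, s, hws⟩ := hdecAll y
    rw [hws, Bar, Bsr, hBtang w hw, h0]
    ring
  -- M Y₀ = d • Y₀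
  have hMY₀ : M Y₀ = d • Y₀ := by
    have horth : ∀ T ∈ W, B (M Y₀ - d • Y₀) T = 0 := by
      intro T hT
      have h := hconf Y₀ T
      rw [hMW T hT, Bsr, hed] at h
      have h2 : B (M Y₀) T = d * B Y₀ T :=
        mul_left_cancel₀ hd0 (by rw [h]; ring)
      rw [B_sub_left hBlin, Bsl, h2]
      ring
    -- write M Y₀ - d • Y₀ = a•R + b•Q + s•Y₀
    obtain ⟨w, hw, s, hws⟩ := hdecAll (M Y₀ - d • Y₀)
    have hs0 : s = 0 := by
      have h := horth R hR
      rw [hws, Bal, Bsl] at h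
      rw [hBsymm w R, hBtang w hw, hBsymm Y₀ R] at h
      have : s * B R Y₀ = 0 := by linarith
      rcases mul_eq_zero.1 this with h' | h'
      · exact h'
      · exact absurd h' hRY₀
    rw [hs0, zero_smul, add_zero] at hws
    -- so Z := M Y₀ - d•Y₀ ∈ W; write it as a•R + b•Q
    obtain ⟨a, b, hab⟩ := hdecW _ (hws ▸ hw)
    have hb0 : b = 0 := by
      have h := horth Q hQW
      rw [hab, Bal, Bsl, Bsl, hBtang Q hQW] at h
      have : b * B Q Q = 0 := by linarith
      rcases mul_eq_zero.1 this with h' | h'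
      · exact h'
      · exact absurd h' hbQ
    rw [hb0, zero_smul, add_zero] at hab
    -- M Y₀ = d•Y₀ + a•R; use conformality on (Y₀, Y₀)
    have hMY : M Y₀ = d • Y₀ + a • R := by
      have : M Y₀ - d • Y₀ = a • R := hab
      linear_combination (norm := module) this
    have hexp : B (d • Y₀ + a • R) (d • Y₀ + a • R)
        = d ^ 2 * B Y₀ Y₀ + 2 * d * a * B R Y₀ + a ^ 2 * B R R := by
      simp only [Bal, Bar, Bsl, Bsr]
      rw [hBsymm Y₀ R]
      ring
    have h := hconf Y₀ Y₀
    rw [hMY, hed, hexp, hBR] at h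
    have ha0 : a = 0 := by
      have h2 : d * (a * B R Y₀) = 0 := by linarith
      have h3 := (mul_eq_zero.1 h2).resolve_left hd0
      exact (mul_eq_zero.1 h3).resolve_right hRY₀
    rw [ha0, zero_smul, add_zero] at hMY
    exact hMY
  -- conclude: M = d • id
  refine ⟨d, hd0, fun Y => ?_⟩
  obtain ⟨w, hw, s, hws⟩ := hdecAll Y
  have hlinM : M (s • Y₀ + w) = s • M Y₀ + M w := chainB_linear hBlin (2 * n) P s Y₀ w
  show M Y = d • Y
  rw [hws, add_comm w (s • Y₀), hlinM, hMY₀, hMW w hw]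
  module
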